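/- Under Hypothesis 1.1 and θ ∈ (0,1), the covariance function R(k) = E(Y_0 Y_k) of the stationary solution Y_t = Σ_{j≥0} θ^j ξ_{t−j} satisfies R(k) ~ C'_{θ,H} L(k) |k|^{2H−2} as k → ∞, for some constant C'_{θ,H} > 0 depending only on θ and H. -/

import Mathlib

open MeasureTheory ProbabilityTheory Filter Real Set
open scoped NNReal ENNReal BigOperators Topology

noncomputable section

/-- A family of real random variables is (jointly) centered Gaussian if every finite
linear combination has a centered Gaussian distribution. -/
def IsCenteredGaussianFamily {Ω : Type*} [MeasurableSpace Ω] (P : Measure Ω)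
    {ι : Type*} (ξ : ι → Ω → ℝ) : Prop :=
  ∀ (s : Finset ι) (c : ι → ℝ), ∃ v : NNReal,
    P.map (fun ω => ∑ i ∈ s, c i * ξ i ω) = gaussianReal 0 v

/-- `L` is slowly varying at infinity in Zygmund's sense: for every `δ > 0`,
`x ^ δ * L x` is eventually increasing and `x ^ (-δ) * L x` is eventually decreasing. -/
def SlowlyVaryingZygmund (L : ℝ → ℝ) : Prop :=
  ∀ δ : ℝ, 0 < δ → ∃ x₀ : ℝ, 0 < x₀ ∧
    MonotoneOn (fun x : ℝ => x ^ δ * L x) (Set.Ici x₀) ∧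
    AntitoneOn (fun x : ℝ => x ^ (-δ) * L x) (Set.Ici x₀)

/-- Hypothesis 1.1: `ξ` is a centered stationary Gaussian sequence with covariance
`ρ(k) = L(|k|) |k|^(2H-2)` (`k ≠ 0`), `ρ(0) = 1`, `H ∈ (1/2, 1)`, `L` positive and slowly
varying at infinity in Zygmund's sense, and `λ ↦ L(1/λ)` of bounded variation on `(a, π)`. -/
structure Hypothesis11 {Ω : Type*} [MeasurableSpace Ω] (P : Measure Ω)
    (ξ : ℤ → Ω → ℝ) (ρ : ℤ → ℝ) (L : ℝ → ℝ) (H : ℝ) : Prop where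
  meas : ∀ t, Measurable (ξ t)
  gauss : IsCenteredGaussianFamily P ξ
  cov : ∀ s t : ℤ, ∫ ω, ξ s ω * ξ t ω ∂P = ρ (t - s)
  Hmem : H ∈ Set.Ioo (1/2 : ℝ) 1
  Lpos : ∀ x : ℝ, 0 < x → 0 < L x
  Lslow : SlowlyVaryingZygmund L
  LBV : ∀ a : ℝ, 0 < a → BoundedVariationOn (fun lam : ℝ => L lam⁻¹) (Set.Ioo a π)
  rho_zero : ρ 0 = 1
  rho_eq : ∀ k : ℤ, k ≠ 0 → ρ k = L |(k : ℝ)| * |(k : ℝ)| ^ (2 * H - 2)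

/-- The stationary solution `Y t = ∑_{j ≥ 0} θ^j ξ_{t-j}` of the AR(1) model. -/
def Ysol {Ω : Type*} (θ : ℝ) (ξ : ℤ → Ω → ℝ) (t : ℤ) (ω : Ω) : ℝ :=
  ∑' j : ℕ, θ ^ j * ξ (t - j) ω

/-- The solution `X t = Y t + θ^t ζ` of the AR(1) model with `X 0 = 0`. -/
def Xsol {Ω : Type*} (θ : ℝ) (ξ : ℤ → Ω → ℝ) (ζ : Ω → ℝ) (t : ℕ) (ω : Ω) : ℝ :=
  Ysol θ ξ t ω + θ ^ t * ζ ω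

/-- `f θ = ∑_{i,j ≥ 0} θ^(i+j) ρ(i - j)`, the second moment of the stationary solution. -/
def fFun (ρ : ℤ → ℝ) (θ : ℝ) : ℝ :=
  ∑' p : ℕ × ℕ, θ ^ (p.1 + p.2) * ρ ((p.1 : ℤ) - (p.2 : ℤ))

/-- Covariance function `R(k) = E(Y_0 Y_k)` of the stationary solution. -/
def RY {Ω : Type*} [MeasurableSpace Ω] (P : Measure Ω) (θ : ℝ) (ξ : ℤ → Ω → ℝ) (k : ℤ) : ℝ :=
  ∫ ω, Ysol θ ξ 0 ω * Ysol θ ξ k ω ∂P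

/-- `σ_H² = 2 ∑_{k ∈ ℤ} R(k)²`. -/
def sigmaH2 {Ω : Type*} [MeasurableSpace Ω] (P : Measure Ω) (θ : ℝ) (ξ : ℤ → Ω → ℝ) : ℝ :=
  2 * ∑' k : ℤ, (RY P θ ξ k) ^ 2

/-- Empirical second moment `(1/n) ∑_{t=1}^n X_t²`. -/
def empAvg {Ω : Type*} (X : ℕ → Ω → ℝ) (n : ℕ) (ω : Ω) : ℝ :=
  (n : ℝ)⁻¹ * ∑ t ∈ Finset.Icc 1 n, (X t ω) ^ 2

/-- `V_n = n^{-1/2} ∑_{t=1}^n (Y_t² - E Y_t²)`. -/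
def Vstat {Ω : Type*} [MeasurableSpace Ω] (P : Measure Ω) (Y : ℤ → Ω → ℝ) (n : ℕ) (ω : Ω) : ℝ :=
  (Real.sqrt n)⁻¹ * ∑ t ∈ Finset.Icc 1 n, ((Y (t : ℤ) ω) ^ 2 - ∫ ω', (Y (t : ℤ) ω') ^ 2 ∂P)

/-- `v_n = (E V_n²)^{1/2}`. -/
def vstat {Ω : Type*} [MeasurableSpace Ω] (P : Measure Ω) (Y : ℤ → Ω → ℝ) (n : ℕ) : ℝ :=
  Real.sqrt (∫ ω, (Vstat P Y n ω) ^ 2 ∂P)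

/-- Total variation distance between two laws on `ℝ`. -/
def dTV (μ ν : Measure ℝ) : ℝ :=
  ⨆ B : {B : Set ℝ // MeasurableSet B}, |(μ B).toReal - (ν B).toReal|

/-- `h` is a spectral density of the autocovariance function `R`:
`h` is nonnegative, even, integrable on `[-π, π]`, and `R k = ∫_{-π}^{π} cos(kλ) h(λ) dλ`. -/
def IsSpectralDensity (R : ℤ → ℝ) (h : ℝ → ℝ) : Prop :=
  (∀ lam : ℝ, 0 ≤ h lam) ∧ IntegrableOn h (Set.Icc (-π) π) ∧
  (∀ lam : ℝ, h (-lam) = h lam) ∧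
  ∀ k : ℤ, R k = ∫ lam in (-π)..π, Real.cos (k * lam) * h lam

/-- The standard normal distribution function `Φ`. -/
def stdNormalCDF (z : ℝ) : ℝ := ((gaussianReal 0 1) (Set.Iic z)).toReal
section aux

variable {Ω : Type*} [MeasurableSpace Ω] {P : Measure Ω} [IsProbabilityMeasure P]
  {ξ : ℤ → Ω → ℝ} {ρ : ℤ → ℝ} {L : ℝ → ℝ} {H θ : ℝ}

lemma aux_int_sq (hyp : Hypothesis11 P ξ ρ L H) (t : ℤ) :
    Integrable (fun ω => ξ t ω * ξ t ω) P := by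
  by_contra h
  have h1 := hyp.cov t t
  rw [integral_undef h, sub_self, hyp.rho_zero] at h1
  exact zero_ne_one h1

lemma aux_int_mul (hyp : Hypothesis11 P ξ ρ L H) (s t : ℤ) :
    Integrable (fun ω => ξ s ω * ξ t ω) P := by
  refine Integrable.mono'
    (g := fun ω => 2⁻¹ * (ξ s ω * ξ s ω) + 2⁻¹ * (ξ t ω * ξ t ω))
    (((aux_int_sq hyp s).const_mul _).add ((aux_int_sq hyp t).const_mul _))
    (((hyp.meas s).mul (hyp.meas t)).aestronglyMeasurable) ?_
  filter_upwards with ω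
  rw [Real.norm_eq_abs, abs_mul]
  nlinarith [sq_nonneg (|ξ s ω| - |ξ t ω|), sq_abs (ξ s ω), sq_abs (ξ t ω)]

lemma aux_abs_int_le_one (hyp : Hypothesis11 P ξ ρ L H) (s t : ℤ) :
    ∫ ω, |ξ s ω * ξ t ω| ∂P ≤ 1 := by
  have h1 : ∫ ω, |ξ s ω * ξ t ω| ∂P
      ≤ ∫ ω, (2⁻¹ * (ξ s ω * ξ s ω) + 2⁻¹ * (ξ t ω * ξ t ω)) ∂P := by
    refine integral_mono (aux_int_mul hyp s t).abs
      (((aux_int_sq hyp s).const_mul _).add ((aux_int_sq hyp t).const_mul _)) ?_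
    intro ω
    simp only [abs_mul]
    nlinarith [sq_nonneg (|ξ s ω| - |ξ t ω|), sq_abs (ξ s ω), sq_abs (ξ t ω)]
  have h2 : ∫ ω, (2⁻¹ * (ξ s ω * ξ s ω) + 2⁻¹ * (ξ t ω * ξ t ω)) ∂P = 1 := by
    rw [integral_add ((aux_int_sq hyp s).const_mul _) ((aux_int_sq hyp t).const_mul _),
      integral_const_mul, integral_const_mul, hyp.cov s s, hyp.cov t t, sub_self, sub_self,
      hyp.rho_zero]
    norm_num
  linarith

lemma aux_rho_le_one (hyp : Hypothesis11 P ξ ρ L H) (m : ℤ) : |ρ m| ≤ 1 := by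
  have h := hyp.cov 0 m
  rw [sub_zero] at h
  rw [← h]
  calc |∫ ω, ξ 0 ω * ξ m ω ∂P| ≤ ∫ ω, |ξ 0 ω * ξ m ω| ∂P := by
        have := norm_integral_le_integral_norm (μ := P) (fun ω => ξ 0 ω * ξ m ω)
        simp only [Real.norm_eq_abs, abs_mul] at this
        simpa [abs_mul] using this
    _ ≤ 1 := aux_abs_int_le_one hyp 0 m

lemma aux_lint_le_one (hyp : Hypothesis11 P ξ ρ L H) (s t : ℤ) :
    ∫⁻ ω, ‖ξ s ω * ξ t ω‖₊ ∂P ≤ 1 := by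
  rw [show (∫⁻ ω, (‖ξ s ω * ξ t ω‖₊ : ℝ≥0∞) ∂P) = ∫⁻ ω, ‖ξ s ω * ξ t ω‖ₑ ∂P from rfl]
  rw [← ofReal_integral_norm_eq_lintegral_enorm (aux_int_mul hyp s t)]
  calc ENNReal.ofReal (∫ ω, ‖ξ s ω * ξ t ω‖ ∂P) ≤ ENNReal.ofReal 1 :=
        ENNReal.ofReal_le_ofReal (by simpa [Real.norm_eq_abs, abs_mul] using aux_abs_int_le_one hyp s t)
    _ = 1 := ENNReal.ofReal_one

lemma aux_lint1_le_two (hyp : Hypothesis11 P ξ ρ L H) (u : ℤ) :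
    ∫⁻ ω, ‖ξ u ω‖₊ ∂P ≤ 2 := by
  have hb : ∀ ω, (‖ξ u ω‖₊ : ℝ≥0∞) ≤ 1 + ‖ξ u ω * ξ u ω‖₊ := by
    intro ω
    have h0 : |ξ u ω| ≤ 1 + |ξ u ω * ξ u ω| := by
      rw [abs_mul]
      nlinarith [sq_nonneg (|ξ u ω| - 1), abs_nonneg (ξ u ω)]
    calc (‖ξ u ω‖₊ : ℝ≥0∞) = ENNReal.ofReal |ξ u ω| := Real.enorm_eq_ofReal_abs _
      _ ≤ ENNReal.ofReal (1 + |ξ u ω * ξ u ω|) := ENNReal.ofReal_le_ofReal h0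
      _ = ENNReal.ofReal 1 + ENNReal.ofReal |ξ u ω * ξ u ω| :=
          ENNReal.ofReal_add (by norm_num) (abs_nonneg _)
      _ = 1 + ‖ξ u ω * ξ u ω‖₊ := by
          rw [ENNReal.ofReal_one]
          exact congrArg (1 + ·) (Real.enorm_eq_ofReal_abs _).symm
  calc ∫⁻ ω, ‖ξ u ω‖₊ ∂P ≤ ∫⁻ ω, (1 + ‖ξ u ω * ξ u ω‖₊) ∂P := lintegral_mono hb
    _ = ∫⁻ (_ : Ω), (1:ℝ≥0∞) ∂P + ∫⁻ ω, (‖ξ u ω * ξ u ω‖₊ : ℝ≥0∞) ∂P :=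
        lintegral_add_left measurable_const _
    _ ≤ 1 + 1 := by
        refine add_le_add ?_ (aux_lint_le_one hyp u u)
        simp [lintegral_const]
    _ = 2 := by norm_num

lemma aux_ae_summable (hyp : Hypothesis11 P ξ ρ L H) (hθ0 : 0 < θ) (hθ1 : θ < 1) (t : ℤ) :
    ∀ᵐ ω ∂P, Summable (fun j : ℕ => ‖θ ^ j * ξ (t - j) ω‖) := by
  set F : ℕ → Ω → ℝ≥0∞ := fun j ω => (‖θ ^ j * ξ (t - j) ω‖₊ : ℝ≥0∞) with hF
  have hFmeas : ∀ j, Measurable (F j) :=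
    fun j => ((hyp.meas _).const_mul _).nnnorm.coe_nnreal_ennreal
  have hsum : ∫⁻ ω, ∑' j, F j ω ∂P ≠ ⊤ := by
    rw [lintegral_tsum (fun j => (hFmeas j).aemeasurable)]
    have hle : ∀ j : ℕ, ∫⁻ ω, F j ω ∂P ≤ ENNReal.ofReal (θ ^ j) * 2 := by
      intro j
      have hrw : ∀ ω, F j ω = ENNReal.ofReal (θ ^ j) * ‖ξ (t - j) ω‖₊ := by
        intro ω
        rw [hF]
        simp only [nnnorm_mul, ENNReal.coe_mul]
        congr 1
        exact Real.enorm_of_nonneg (pow_nonneg hθ0.le j)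
      simp_rw [hrw]
      rw [lintegral_const_mul _ ((hyp.meas _).nnnorm.coe_nnreal_ennreal)]
      exact mul_le_mul_right (aux_lint1_le_two hyp _) _
    have hle2 : ∑' j, ∫⁻ ω, F j ω ∂P ≤ (∑' j : ℕ, ENNReal.ofReal (θ ^ j)) * 2 :=
      le_trans (ENNReal.tsum_le_tsum hle) (le_of_eq ENNReal.tsum_mul_right)
    refine ne_top_of_le_ne_top ?_ hle2
    rw [← ENNReal.ofReal_tsum_of_nonneg (fun j => pow_nonneg hθ0.le j)
      (summable_geometric_of_lt_one hθ0.le hθ1)]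
    exact ENNReal.mul_ne_top ENNReal.ofReal_ne_top (by norm_num)
  filter_upwards [ae_lt_top (Measurable.ennreal_tsum hFmeas) hsum] with ω hω
  have h2 : Summable (fun j : ℕ => ‖θ ^ j * ξ (t - j) ω‖₊) :=
    ENNReal.tsum_coe_ne_top_iff_summable.mp hω.ne
  simpa [coe_nnnorm] using NNReal.summable_coe.mpr h2

lemma covFormula (hyp : Hypothesis11 P ξ ρ L H) (hθ0 : 0 < θ) (hθ1 : θ < 1) (k : ℤ) :
    RY P θ ξ k = ∑' p : ℕ × ℕ, θ ^ p.1 * θ ^ p.2 * ρ (k + p.1 - p.2) := by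
  set g : ℕ × ℕ → Ω → ℝ :=
    fun p ω => (θ ^ p.1 * ξ (0 - p.1) ω) * (θ ^ p.2 * ξ (k - p.2) ω) with hg
  have hgmeas : ∀ p, AEStronglyMeasurable (g p) P := fun p =>
    (((hyp.meas _).const_mul _).mul ((hyp.meas _).const_mul _)).aestronglyMeasurable
  have hae : ∀ᵐ ω ∂P, Ysol θ ξ 0 ω * Ysol θ ξ k ω = ∑' p : ℕ × ℕ, g p ω := by
    filter_upwards [aux_ae_summable hyp hθ0 hθ1 0, aux_ae_summable hyp hθ0 hθ1 k] with ω h0 hk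
    exact tsum_mul_tsum_of_summable_norm h0 hk
  have hsummableθ : Summable (fun p : ℕ × ℕ => θ ^ p.1 * θ ^ p.2) :=
    (summable_geometric_of_lt_one hθ0.le hθ1).mul_of_nonneg
      (summable_geometric_of_lt_one hθ0.le hθ1)
      (fun i => pow_nonneg hθ0.le i) (fun j => pow_nonneg hθ0.le j)
  have hlintg : ∀ p : ℕ × ℕ, ∫⁻ ω, ‖g p ω‖₊ ∂P ≤ ENNReal.ofReal (θ ^ p.1 * θ ^ p.2) := by
    intro p
    have hrw : ∀ ω, (‖g p ω‖₊ : ℝ≥0∞)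
        = ENNReal.ofReal (θ ^ p.1 * θ ^ p.2) * ‖ξ (0 - p.1) ω * ξ (k - p.2) ω‖₊ := by
      intro ω
      have h1 : g p ω = (θ ^ p.1 * θ ^ p.2) * (ξ (0 - p.1) ω * ξ (k - p.2) ω) := by
        rw [hg]; ring
      rw [h1, nnnorm_mul, ENNReal.coe_mul]
      congr 1
      exact Real.enorm_of_nonneg (by positivity)
    calc ∫⁻ ω, ‖g p ω‖₊ ∂P
        = ENNReal.ofReal (θ ^ p.1 * θ ^ p.2) * ∫⁻ ω, ‖ξ (0 - p.1) ω * ξ (k - p.2) ω‖₊ ∂P := by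
          simp_rw [hrw]
          exact lintegral_const_mul _ (((hyp.meas _).mul (hyp.meas _)).nnnorm.coe_nnreal_ennreal)
      _ ≤ ENNReal.ofReal (θ ^ p.1 * θ ^ p.2) * 1 :=
          mul_le_mul_right (aux_lint_le_one hyp _ _) _
      _ = ENNReal.ofReal (θ ^ p.1 * θ ^ p.2) := mul_one _
  have hfin : ∑' p : ℕ × ℕ, ∫⁻ ω, ‖g p ω‖₊ ∂P ≠ ⊤ := by
    refine ne_top_of_le_ne_top ?_ (ENNReal.tsum_le_tsum hlintg)
    rw [← ENNReal.ofReal_tsum_of_nonneg (fun p => by positivity) hsummableθ]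
    exact ENNReal.ofReal_ne_top
  have hRY : RY P θ ξ k = ∑' p : ℕ × ℕ, ∫ ω, g p ω ∂P := by
    rw [RY, integral_congr_ae hae, integral_tsum hgmeas hfin]
  rw [hRY]
  refine tsum_congr fun p => ?_
  have h1 : (fun ω => g p ω)
      = fun ω => (θ ^ p.1 * θ ^ p.2) * (ξ (0 - p.1) ω * ξ (k - p.2) ω) := by
    funext ω; rw [hg]; ring
  rw [h1, integral_const_mul, hyp.cov]
  congr 1
  ring

end aux

set_option maxHeartbeats 1000000 in
/-- under Hypothesis 1.1 and `θ ∈ (0,1)`, the covariance of the stationary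
solution satisfies `R(k) ~ C'_{θ,H} L(k) k^{2H-2}` as `k → ∞`. -/
theorem stationary_solution_covariance_asymptotics
    {Ω : Type*} [MeasurableSpace Ω] (P : Measure Ω) [IsProbabilityMeasure P]
    (ξ : ℤ → Ω → ℝ) (ρ : ℤ → ℝ) (L : ℝ → ℝ) (H θ : ℝ)
    (hyp : Hypothesis11 P ξ ρ L H) (hθ : θ ∈ Set.Ioo (0 : ℝ) 1) :
    ∃ C' : ℝ, 0 < C' ∧
      Tendsto (fun k : ℕ => RY P θ ξ k / (C' * L k * (k : ℝ) ^ (2 * H - 2)))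
        atTop (𝓝 1) := by
  obtain ⟨hθ0, hθ1⟩ := hθ
  obtain ⟨hH1, hH2⟩ := hyp.Hmem
  set α : ℝ := 2 * H - 2 with hαdef
  have hα0 : α < 0 := by rw [hαdef]; linarith
  have hαm1 : -1 < α := by rw [hαdef]; norm_num at hH1 ⊢; linarith
  -- Zygmund with δ = 1
  obtain ⟨y₀, hy₀pos, hmono, hanti⟩ := hyp.Lslow 1 one_pos
  set x₀ : ℝ := max y₀ 1 with hx₀def
  have hx₀1 : (1:ℝ) ≤ x₀ := le_max_right _ _
  have hx₀0 : (0:ℝ) < x₀ := lt_of_lt_of_le one_pos hx₀1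
  have hLpos : ∀ x : ℝ, x₀ ≤ x → 0 < L x := fun x hx => hyp.Lpos x (lt_of_lt_of_le hx₀0 hx)
  have hup : ∀ x y : ℝ, x₀ ≤ x → x ≤ y → x * L y ≤ y * L x := by
    intro x y hx hxy
    have hx0 : 0 < x := lt_of_lt_of_le hx₀0 hx
    have hy0 : 0 < y := lt_of_lt_of_le hx0 hxy
    have hxm : x ∈ Set.Ici y₀ := le_trans (le_max_left _ _) hx
    have hym : y ∈ Set.Ici y₀ := le_trans (le_trans (le_max_left _ _) hx) hxy
    have h := hanti hxm hym hxy
    simp only [Real.rpow_neg_one] at h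
    have h2 := mul_le_mul_of_nonneg_left h (le_of_lt (mul_pos hy0 hx0))
    calc x * L y = (y * x) * (y⁻¹ * L y) := by
          rw [show (y * x) * (y⁻¹ * L y) = (y * y⁻¹) * (x * L y) from by ring,
            mul_inv_cancel₀ hy0.ne', one_mul]
      _ ≤ (y * x) * (x⁻¹ * L x) := h2
      _ = y * L x := by
          rw [show (y * x) * (x⁻¹ * L x) = (x * x⁻¹) * (y * L x) from by ring,
            mul_inv_cancel₀ hx0.ne', one_mul]
  have hdown : ∀ x y : ℝ, x₀ ≤ x → x ≤ y → x * L x ≤ y * L y := by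
    intro x y hx hxy
    have hxm : x ∈ Set.Ici y₀ := le_trans (le_max_left _ _) hx
    have hym : y ∈ Set.Ici y₀ := le_trans hxm hxy
    have h := hmono hxm hym hxy
    simpa [Real.rpow_one] using h
  -- quotient limit helper
  have hquot : ∀ a b : ℝ, Tendsto (fun k : ℕ => ((k:ℝ) + a) / ((k:ℝ) + b)) atTop (𝓝 1) := by
    intro a b
    have h1 : Tendsto (fun k : ℕ => 1 + a / (k:ℝ)) atTop (𝓝 (1 + 0)) :=
      tendsto_const_nhds.add (tendsto_const_div_atTop_nhds_zero_nat a)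
    have h2 : Tendsto (fun k : ℕ => 1 + b / (k:ℝ)) atTop (𝓝 (1 + 0)) :=
      tendsto_const_nhds.add (tendsto_const_div_atTop_nhds_zero_nat b)
    have h3 := h1.div h2 (by norm_num)
    have h4 : ((1:ℝ) + 0) / (1 + 0) = 1 := by norm_num
    rw [h4] at h3
    refine h3.congr' ?_
    filter_upwards [(tendsto_natCast_atTop_atTop (R := ℝ)).eventually_ge_atTop (|b| + 1)]
      with k hk
    have hb' : -|b| ≤ b := neg_abs_le b
    have hk0 : (0:ℝ) < (k:ℝ) := by nlinarith [abs_nonneg b]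
    have hkb : (0:ℝ) < (k:ℝ) + b := by nlinarith
    rw [Pi.div_apply]
    field_simp
  -- key pointwise limit
  have key : ∀ m : ℤ, Tendsto (fun k : ℕ => ρ ((k:ℤ) + m) / (L k * (k:ℝ) ^ α)) atTop (𝓝 1) := by
    intro m
    set M : ℝ := |(m:ℝ)| with hMdef
    have hM0 : (0:ℝ) ≤ M := abs_nonneg _
    have hmub : (m:ℝ) ≤ M := le_abs_self _
    have hmlb : -M ≤ (m:ℝ) := neg_abs_le _
    have hev : ∀ᶠ k : ℕ in atTop, x₀ + M + 1 ≤ (k:ℝ) :=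
      (tendsto_natCast_atTop_atTop (R := ℝ)).eventually_ge_atTop _
    have hL1 : Tendsto (fun k : ℕ => L ((k:ℝ) + (m:ℝ)) / L (k:ℝ)) atTop (𝓝 1) := by
      refine tendsto_of_tendsto_of_tendsto_of_le_of_le' (hquot (-M) M) (hquot M (-M)) ?_ ?_
      · filter_upwards [hev] with k hk
        have hkx : x₀ ≤ (k:ℝ) := by linarith
        have hnx : x₀ ≤ (k:ℝ) + m := by linarith
        have hk0 : (0:ℝ) < k := lt_of_lt_of_le hx₀0 hkx
        have hn0 : (0:ℝ) < (k:ℝ) + m := lt_of_lt_of_le hx₀0 hnx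
        have hLk := hLpos _ hkx
        have hLn := hLpos _ hnx
        have hkM : (0:ℝ) < (k:ℝ) + M := by linarith
        rw [div_le_div_iff₀ hkM hLk]
        rcases le_total (k:ℝ) ((k:ℝ) + m) with hc | hc
        · have h1 := hdown (k:ℝ) _ hkx hc
          nlinarith [mul_nonneg hM0 hLk.le,
            mul_le_mul_of_nonneg_right (show (k:ℝ) + m ≤ (k:ℝ) + M by linarith) hLn.le]
        · have h1 := hup _ (k:ℝ) hnx hc
          nlinarith [mul_nonneg hM0 hLk.le,
            mul_le_mul_of_nonneg_right (show (k:ℝ) + -M ≤ (k:ℝ) + m by linarith) hLk.le]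
      · filter_upwards [hev] with k hk
        have hkx : x₀ ≤ (k:ℝ) := by linarith
        have hnx : x₀ ≤ (k:ℝ) + m := by linarith
        have hk0 : (0:ℝ) < k := lt_of_lt_of_le hx₀0 hkx
        have hn0 : (0:ℝ) < (k:ℝ) + m := lt_of_lt_of_le hx₀0 hnx
        have hLk := hLpos _ hkx
        have hLn := hLpos _ hnx
        have hkmM : (0:ℝ) < (k:ℝ) + -M := by linarith
        rw [div_le_div_iff₀ hLk hkmM]
        rcases le_total (k:ℝ) ((k:ℝ) + m) with hc | hc
        · have h1 := hup (k:ℝ) _ hkx hc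
          nlinarith [mul_nonneg hM0 hLn.le,
            mul_le_mul_of_nonneg_right (show (k:ℝ) + m ≤ (k:ℝ) + M by linarith) hLk.le]
        · have h1 := hdown _ (k:ℝ) hnx hc
          nlinarith [mul_nonneg hM0 hLk.le,
            mul_le_mul_of_nonneg_right (show (k:ℝ) + -M ≤ (k:ℝ) + m by linarith) hLn.le]
    have hratio : Tendsto (fun k : ℕ => ((k:ℝ) + m) / (k:ℝ)) atTop (𝓝 1) := by
      simpa using hquot (m:ℝ) 0
    have hpow : Tendsto (fun k : ℕ => ((k:ℝ) + m) ^ α / (k:ℝ) ^ α) atTop (𝓝 1) := by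
      have hc : ContinuousAt (fun x : ℝ => x ^ α) 1 :=
        Real.continuousAt_rpow_const 1 α (Or.inl one_ne_zero)
      have h2 := hc.tendsto.comp hratio
      rw [Real.one_rpow] at h2
      refine h2.congr' ?_
      filter_upwards [hev] with k hk
      have hk0 : (0:ℝ) ≤ (k:ℝ) := Nat.cast_nonneg k
      have hn0 : (0:ℝ) ≤ (k:ℝ) + m := by linarith
      simp only [Function.comp_apply]
      rw [Real.div_rpow hn0 hk0]
    have hmul := hL1.mul hpow
    rw [mul_one] at hmul
    refine hmul.congr' ?_
    filter_upwards [hev] with k hk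
    have hk0 : (0:ℝ) < k := by linarith
    have hn0 : (0:ℝ) < (k:ℝ) + m := by linarith
    have hne : ((k:ℤ) + m) ≠ 0 := by
      have h5 : (0:ℤ) < (k:ℤ) + m := by exact_mod_cast (by push_cast; linarith : (0:ℝ) < ((k:ℤ):ℝ) + (m:ℝ))
      exact h5.ne'
    have habs : |(((k:ℤ) + m : ℤ):ℝ)| = (k:ℝ) + (m:ℝ) := by
      rw [abs_of_pos (by push_cast; linarith)]
      push_cast; ring
    rw [hyp.rho_eq _ hne, habs, ← hαdef, div_mul_div_comm]
  -- geometric-type constants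
  set q : ℝ := Real.sqrt θ with hqdef
  have hq0 : 0 < q := Real.sqrt_pos.mpr hθ0
  have hqθ : q * q = θ := Real.mul_self_sqrt hθ0.le
  have hq1 : q < 1 := by
    rw [hqdef, ← Real.sqrt_one]
    exact Real.sqrt_lt_sqrt hθ0.le hθ1
  set q4 : ℝ := Real.sqrt q with hq4def
  have hq40 : 0 < q4 := Real.sqrt_pos.mpr hq0
  have hq4q : q4 * q4 = q := Real.mul_self_sqrt hq0.le
  have hq41 : q4 < 1 := by
    rw [hq4def, ← Real.sqrt_one]
    exact Real.sqrt_lt_sqrt hq0.le hq1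
  -- eventual lower bound for L k * k^α against q4^k
  have hc0 : (0:ℝ) < x₀ * L x₀ := mul_pos hx₀0 (hLpos _ le_rfl)
  have hgeo : Tendsto (fun k : ℕ => ((k:ℝ))^2 * q4 ^ k) atTop (𝓝 0) := by
    have h := (summable_pow_mul_geometric_of_norm_lt_one 2 (r := q4)
      (by rw [Real.norm_eq_abs, abs_of_pos hq40]; exact hq41)).tendsto_atTop_zero
    simpa using h
  have hφ : Tendsto (fun k : ℕ => (k:ℝ) * (k:ℝ) ^ (-α) * q4 ^ k) atTop (𝓝 0) := by
    refine tendsto_of_tendsto_of_tendsto_of_le_of_le' tendsto_const_nhds hgeo ?_ ?_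
    · filter_upwards [(tendsto_natCast_atTop_atTop (R := ℝ)).eventually_ge_atTop 1] with k hk
      have hk0 : (0:ℝ) < k := by linarith
      positivity
    · filter_upwards [(tendsto_natCast_atTop_atTop (R := ℝ)).eventually_ge_atTop 1] with k hk
      have h1 : (k:ℝ) ^ (-α) ≤ (k:ℝ) ^ (1:ℝ) :=
        Real.rpow_le_rpow_of_exponent_le hk (by linarith)
      rw [Real.rpow_one] at h1
      have hk0 : (0:ℝ) < k := by linarith
      have h2 : (k:ℝ) * (k:ℝ) ^ (-α) ≤ (k:ℝ)^2 := by nlinarith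
      nlinarith [pow_nonneg hq40.le k, Real.rpow_pos_of_pos hk0 (-α)]
  have hevq : ∀ᶠ k : ℕ in atTop, q4 ^ k ≤ L k * (k:ℝ) ^ α := by
    filter_upwards [hφ.eventually (gt_mem_nhds hc0),
      (tendsto_natCast_atTop_atTop (R := ℝ)).eventually_ge_atTop x₀] with k h1 hk
    have hk0 : (0:ℝ) < k := lt_of_lt_of_le hx₀0 hk
    have hkα : (0:ℝ) < (k:ℝ) ^ α := Real.rpow_pos_of_pos hk0 α
    have hkmα : (0:ℝ) < (k:ℝ) ^ (-α) := Real.rpow_pos_of_pos hk0 (-α)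
    have h2 : q4 ^ k ≤ (x₀ * L x₀) / ((k:ℝ) * (k:ℝ) ^ (-α)) := by
      rw [le_div_iff₀ (by positivity)]
      calc q4 ^ k * ((k:ℝ) * (k:ℝ) ^ (-α)) = (k:ℝ) * (k:ℝ) ^ (-α) * q4 ^ k := by ring
        _ ≤ x₀ * L x₀ := h1.le
    have h3 : (x₀ * L x₀) / ((k:ℝ) * (k:ℝ) ^ (-α)) = ((x₀ * L x₀) / k) * (k:ℝ) ^ α := by
      rw [Real.rpow_neg hk0.le]
      field_simp
    have h4 : ((x₀ * L x₀) / k) * (k:ℝ) ^ α ≤ L k * (k:ℝ) ^ α := by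
      refine mul_le_mul_of_nonneg_right ?_ hkα.le
      rw [div_le_iff₀ hk0]
      calc x₀ * L x₀ ≤ (k:ℝ) * L (k:ℝ) := hdown x₀ _ le_rfl hk
        _ = L (k:ℝ) * k := mul_comm _ _
    calc q4 ^ k ≤ (x₀ * L x₀) / ((k:ℝ) * (k:ℝ) ^ (-α)) := h2
      _ = ((x₀ * L x₀) / k) * (k:ℝ) ^ α := h3
      _ ≤ L k * (k:ℝ) ^ α := h4
  -- the dominating bound
  set bnd : ℕ × ℕ → ℝ :=
    fun p => 4 * (1 + (p.1:ℝ)) * (θ ^ p.1 * θ ^ p.2) + θ ^ p.1 * q ^ p.2 with hbnd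
  have hsumθ : Summable (fun i : ℕ => θ ^ i) := summable_geometric_of_lt_one hθ0.le hθ1
  have hbnd_sum : Summable bnd := by
    refine Summable.add ?_ ?_
    · have h1 : Summable (fun i : ℕ => (i:ℝ) * θ ^ i) := by
        simpa using summable_pow_mul_geometric_of_norm_lt_one 1 (r := θ)
          (by rw [Real.norm_eq_abs, abs_of_pos hθ0]; exact hθ1)
      have hf : Summable (fun i : ℕ => 4 * (1 + (i:ℝ)) * θ ^ i) := by
        refine Summable.congr ((hsumθ.mul_left 4).add (h1.mul_left 4)) ?_
        intro i; push_cast; ring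
      refine (hf.mul_of_nonneg hsumθ (fun i => by positivity) (fun j => by positivity)).congr ?_
      intro p; ring
    · exact (hsumθ.mul_of_nonneg (summable_geometric_of_lt_one hq0.le hq1)
        (fun i => by positivity) (fun j => by positivity))
  have hev2x : ∀ᶠ k : ℕ in atTop, x₀ ≤ (k:ℝ)/2 ∧ (1:ℝ) ≤ (k:ℝ) := by
    filter_upwards [(tendsto_natCast_atTop_atTop (R := ℝ)).eventually_ge_atTop (2*x₀ + 1)]
      with k hk
    constructor
    · linarith
    · linarith
  have h_bound : ∀ᶠ k : ℕ in atTop, ∀ p : ℕ × ℕ,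
      ‖θ ^ p.1 * θ ^ p.2 * ρ ((k:ℤ) + p.1 - p.2) / (L k * (k:ℝ) ^ α)‖ ≤ bnd p := by
    filter_upwards [hev2x, hevq] with k hk hkq
    obtain ⟨hk2, hk1⟩ := hk
    intro p
    have hkx : x₀ ≤ (k:ℝ) := by linarith
    have hk0 : (0:ℝ) < k := by linarith
    have hLk := hLpos _ hkx
    have hkα : (0:ℝ) < (k:ℝ) ^ α := Real.rpow_pos_of_pos hk0 α
    have hD : (0:ℝ) < L k * (k:ℝ) ^ α := mul_pos hLk hkα
    rw [Real.norm_eq_abs, abs_div, abs_of_pos hD, abs_mul, abs_mul,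
      abs_of_pos (pow_pos hθ0 p.1), abs_of_pos (pow_pos hθ0 p.2),
      div_le_iff₀ hD]
    rcases le_or_gt (2 * p.2) k with hcase | hcase
    · -- case A : p.2 ≤ k/2
      have hp2 : (p.2:ℝ) ≤ (k:ℝ)/2 := by
        have h6 := (Nat.cast_le (α := ℝ)).mpr hcase
        push_cast at h6; linarith
      set n : ℝ := (k:ℝ) + p.1 - p.2 with hn
      have hp1nn : (0:ℝ) ≤ (p.1:ℝ) := Nat.cast_nonneg _
      have hn_lb : (k:ℝ)/2 ≤ n := by rw [hn]; linarith
      have hnx : x₀ ≤ n := le_trans hk2 hn_lb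
      have hn0 : (0:ℝ) < n := lt_of_lt_of_le hx₀0 hnx
      have hLn := hLpos _ hnx
      have hcast : (((k:ℤ) + p.1 - p.2 : ℤ):ℝ) = n := by rw [hn]; push_cast; ring
      have hnz : ((k:ℤ) + p.1 - p.2 : ℤ) ≠ 0 := by
        intro h0
        rw [h0] at hcast
        simp only [Int.cast_zero] at hcast
        linarith
      have hrho : |ρ ((k:ℤ) + p.1 - p.2)| ≤ 4 * (1 + (p.1:ℝ)) * (L k * (k:ℝ) ^ α) := by
        rw [hyp.rho_eq _ hnz, hcast, ← hαdef, abs_of_pos hn0,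
          abs_of_pos (mul_pos hLn (Real.rpow_pos_of_pos hn0 α))]
        rcases le_total (k:ℝ) n with hc | hc
        · have h1 := hup (k:ℝ) n hkx hc
          have hna : n ^ α ≤ (k:ℝ) ^ α := Real.rpow_le_rpow_of_nonpos hk0 hc hα0.le
          have hn_ub : n ≤ (k:ℝ) + p.1 := by
            rw [hn]; have : (0:ℝ) ≤ (p.2:ℝ) := Nat.cast_nonneg _; linarith
          have hLn_ub : L n ≤ (1 + (p.1:ℝ)) * L k := by
            rw [← mul_le_mul_iff_of_pos_left hk0]
            nlinarith [mul_le_mul_of_nonneg_right hn_ub hLk.le,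
              mul_nonneg (mul_nonneg (sub_nonneg.mpr hk1) hp1nn) hLk.le]
          calc L n * n ^ α ≤ ((1 + (p.1:ℝ)) * L k) * ((k:ℝ) ^ α) :=
                mul_le_mul hLn_ub hna (Real.rpow_nonneg hn0.le α) (by positivity)
            _ ≤ 4 * (1 + (p.1:ℝ)) * (L k * (k:ℝ) ^ α) := by
                nlinarith [mul_nonneg (mul_nonneg
                  (by positivity : (0:ℝ) ≤ 1 + (p.1:ℝ)) hLk.le) hkα.le]
        · have h1 := hdown n (k:ℝ) hnx hc
          have hLn_ub : L n ≤ 2 * L k := by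
            rw [← mul_le_mul_iff_of_pos_left hn0]
            nlinarith [mul_le_mul_of_nonneg_right (show (k:ℝ) ≤ 2*n by linarith) hLk.le]
          have hna : n ^ α ≤ 2 * (k:ℝ) ^ α := by
            have h3 : n ^ α ≤ ((k:ℝ)/2) ^ α :=
              Real.rpow_le_rpow_of_nonpos (by linarith) hn_lb hα0.le
            have h4 : ((k:ℝ)/2) ^ α = (k:ℝ) ^ α * ((2:ℝ) ^ α)⁻¹ := by
              rw [Real.div_rpow hk0.le (by norm_num : (0:ℝ) ≤ 2)]
              ring
            have h5 : ((2:ℝ) ^ α)⁻¹ ≤ 2 := by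
              rw [← Real.rpow_neg (by norm_num : (0:ℝ) ≤ 2)]
              calc (2:ℝ) ^ (-α) ≤ (2:ℝ) ^ (1:ℝ) :=
                    Real.rpow_le_rpow_of_exponent_le one_le_two (by linarith)
                _ = 2 := Real.rpow_one 2
            calc n ^ α ≤ (k:ℝ) ^ α * ((2:ℝ) ^ α)⁻¹ := by rw [← h4]; exact h3
              _ ≤ (k:ℝ) ^ α * 2 := by
                  refine mul_le_mul_of_nonneg_left h5 hkα.le
              _ = 2 * (k:ℝ) ^ α := mul_comm _ _
          calc L n * n ^ α ≤ (2 * L k) * (2 * (k:ℝ) ^ α) :=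
                mul_le_mul hLn_ub hna (Real.rpow_nonneg hn0.le α) (by positivity)
            _ = 4 * (L k * (k:ℝ) ^ α) := by ring
            _ ≤ 4 * (1 + (p.1:ℝ)) * (L k * (k:ℝ) ^ α) := by
                nlinarith [mul_nonneg hLk.le hkα.le]
      calc θ ^ p.1 * θ ^ p.2 * |ρ ((k:ℤ) + p.1 - p.2)|
          ≤ θ ^ p.1 * θ ^ p.2 * (4 * (1 + (p.1:ℝ)) * (L k * (k:ℝ) ^ α)) :=
            mul_le_mul_of_nonneg_left hrho (by positivity)
        _ ≤ bnd p * (L k * (k:ℝ) ^ α) := by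
            simp only [hbnd]
            nlinarith [mul_nonneg (mul_nonneg (pow_nonneg hθ0.le p.1)
              (pow_nonneg hq0.le p.2)) hD.le]
    · -- case B : 2 p.2 > k
      have hrho : |ρ ((k:ℤ) + p.1 - p.2)| ≤ 1 := aux_rho_le_one hyp _
      have hθp2 : θ ^ p.2 ≤ q ^ p.2 * q4 ^ k := by
        have h1 : θ ^ p.2 = q ^ p.2 * q ^ p.2 := by rw [← hqθ, mul_pow]
        have h2 : q ^ p.2 = q4 ^ (2 * p.2) := by
          rw [← hq4q, mul_pow, ← pow_add, two_mul]
        have h3 : q4 ^ (2 * p.2) ≤ q4 ^ k :=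
          pow_le_pow_of_le_one hq40.le hq41.le hcase.le
        calc θ ^ p.2 = q ^ p.2 * q ^ p.2 := h1
          _ = q ^ p.2 * q4 ^ (2 * p.2) := by rw [← h2]
          _ ≤ q ^ p.2 * q4 ^ k := mul_le_mul_of_nonneg_left h3 (pow_nonneg hq0.le _)
      have hs1 : θ ^ p.1 * θ ^ p.2 * |ρ ((k:ℤ) + p.1 - p.2)| ≤ θ ^ p.1 * θ ^ p.2 := by
        have := mul_le_mul_of_nonneg_left hrho
          (by positivity : (0:ℝ) ≤ θ ^ p.1 * θ ^ p.2)
        simpa using this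
      have hs2 : θ ^ p.1 * θ ^ p.2 ≤ θ ^ p.1 * (q ^ p.2 * q4 ^ k) :=
        mul_le_mul_of_nonneg_left hθp2 (pow_nonneg hθ0.le _)
      have hs3 : θ ^ p.1 * (q ^ p.2 * q4 ^ k)
          ≤ θ ^ p.1 * (q ^ p.2 * (L k * (k:ℝ) ^ α)) := by
        refine mul_le_mul_of_nonneg_left ?_ (pow_nonneg hθ0.le _)
        exact mul_le_mul_of_nonneg_left hkq (pow_nonneg hq0.le _)
      have hs4 : θ ^ p.1 * (q ^ p.2 * (L k * (k:ℝ) ^ α)) ≤ bnd p * (L k * (k:ℝ) ^ α) := by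
        simp only [hbnd]
        nlinarith [mul_nonneg (mul_nonneg (by positivity : (0:ℝ) ≤ 4*(1+(p.1:ℝ)))
          (by positivity : (0:ℝ) ≤ θ ^ p.1 * θ ^ p.2)) hD.le]
      exact le_trans hs1 (le_trans hs2 (le_trans hs3 hs4))
  -- pointwise limits
  have hab : ∀ p : ℕ × ℕ, Tendsto (fun k : ℕ =>
      θ ^ p.1 * θ ^ p.2 * ρ ((k:ℤ) + p.1 - p.2) / (L k * (k:ℝ) ^ α)) atTop
      (𝓝 (θ ^ p.1 * θ ^ p.2)) := by
    intro p
    have h1 := (key ((p.1:ℤ) - p.2)).const_mul (θ ^ p.1 * θ ^ p.2)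
    rw [mul_one] at h1
    refine h1.congr fun k => ?_
    rw [← add_sub_assoc, mul_div_assoc]
  have hmain : Tendsto (fun k : ℕ => ∑' p : ℕ × ℕ,
      θ ^ p.1 * θ ^ p.2 * ρ ((k:ℤ) + p.1 - p.2) / (L k * (k:ℝ) ^ α)) atTop
      (𝓝 (∑' p : ℕ × ℕ, θ ^ p.1 * θ ^ p.2)) :=
    tendsto_tsum_of_dominated_convergence hbnd_sum hab h_bound
  have hsummableθ : Summable (fun p : ℕ × ℕ => θ ^ p.1 * θ ^ p.2) :=
    hsumθ.mul_of_nonneg hsumθ (fun i => pow_nonneg hθ0.le i) (fun j => pow_nonneg hθ0.le j)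
  set T : ℝ := ∑' p : ℕ × ℕ, θ ^ p.1 * θ ^ p.2 with hT
  have hT1 : (1:ℝ) ≤ T := by
    have h0 := hsummableθ.le_tsum (0, 0) (fun j _ => by positivity)
    simpa using h0
  refine ⟨T, by linarith, ?_⟩
  have hdiv := hmain.div_const T
  rw [div_self (by linarith : T ≠ 0)] at hdiv
  refine hdiv.congr fun k => ?_
  rw [tsum_div_const, ← covFormula hyp hθ0 hθ1 (k:ℤ), div_div]
  congr 1
  ring
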